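/- Let χ : ℝ^d → [0,1] be a Lipschitz probability density supported in the Euclidean unit ball, ε ∈ (0,1), χ_ε(x) = ε^{-d} χ(x/ε), and for η : ℝ^d → ℝ Lipschitz with constant ≤ 1, supported in B_R, and η ≡ 0 outside B_R, define the discrete convolution η^ε_N(x) = N^{-d} Σ_{y∈ℤ^d} χ_ε(x − y/N) η(y/N). Then limsup_N sup_η sup_{x ∈ B_{R−ε}} |η^ε_N(x) − η(x)| ≤ ε ∫ χ(y)|y| dy, where the middle supremum runs over all η ∈ Lip_1(B_R) with ‖η‖_∞ ≤ 1 (extended by zero). -/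

import Mathlib

open MeasureTheory Filter

noncomputable section

/-- Points of the lattice `ℤ^d`. -/
abbrev Zd (d : ℕ) := Fin d → ℤ

/-- The closed box `B_ρ = [−ρ,ρ]^d ⊆ ℝ^d`. -/
def boxR (d : ℕ) (ρ : ℝ) : Set (EuclideanSpace ℝ (Fin d)) := {x | ∀ i, |x i| ≤ ρ}

/-- The embedding of `ℤ^d` into `ℝ^d`. -/
def embed (d : ℕ) (y : Zd d) : EuclideanSpace ℝ (Fin d) := WithLp.toLp 2 (fun i => (y i : ℝ))

lemma abs_coord_le_norm {d : ℕ} (w : EuclideanSpace ℝ (Fin d)) (i : Fin d) : |w i| ≤ ‖w‖ := by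
  have h := EuclideanSpace.norm_eq w
  rw [h]
  have : |w i| = Real.sqrt (‖w i‖^2) := by
    rw [Real.sqrt_sq_eq_abs]; simp [Real.norm_eq_abs, abs_abs]
  rw [this]
  apply Real.sqrt_le_sqrt
  exact Finset.single_le_sum (f := fun j => ‖w j‖^2) (fun j _ => sq_nonneg _) (Finset.mem_univ i)

lemma norm_le_of_coords {d : ℕ} (hd : 1 ≤ d) (w : EuclideanSpace ℝ (Fin d)) {c : ℝ} (hc : 0 ≤ c)
    (h : ∀ i, |w i| ≤ c) : ‖w‖ ≤ d * c := by
  rw [EuclideanSpace.norm_eq]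
  have h1 : ∑ i, ‖w i‖^2 ≤ d * c^2 := by
    calc ∑ i, ‖w i‖^2 ≤ ∑ _i : Fin d, c^2 := by
          apply Finset.sum_le_sum; intro i _
          rw [Real.norm_eq_abs, sq_abs, ← sq_abs]
          exact pow_le_pow_left₀ (abs_nonneg _) (h i) 2
      _ = d * c^2 := by simp [mul_comm]
  have hd1 : (1:ℝ) ≤ d := by exact_mod_cast hd
  calc Real.sqrt (∑ i, ‖w i‖^2) ≤ Real.sqrt ((d:ℝ) * c^2) := Real.sqrt_le_sqrt h1
    _ = Real.sqrt d * c := by rw [Real.sqrt_mul (by positivity), Real.sqrt_sq hc]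
    _ ≤ d * c := by
        apply mul_le_mul_of_nonneg_right _ hc
        calc Real.sqrt d ≤ Real.sqrt ((d:ℝ)^2) := Real.sqrt_le_sqrt (by nlinarith)
          _ = d := Real.sqrt_sq (by positivity)

section Riemann
variable {d : ℕ}

/-- The half-open cube with corner `y/N` and side `1/N`. -/
def cube (d N : ℕ) (y : Zd d) : Set (EuclideanSpace ℝ (Fin d)) :=
  {z | ∀ i, (y i : ℝ)/N ≤ z i ∧ z i < ((y i : ℝ)+1)/N}

lemma cube_eq_preimage (d N : ℕ) (y : Zd d) :
    cube d N y = (MeasurableEquiv.toLp 2 (Fin d → ℝ)).symm ⁻¹'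
      (Set.univ.pi fun i => Set.Ico ((y i : ℝ)/N) (((y i : ℝ)+1)/N)) := by
  ext z
  simp [cube, Set.mem_pi, Set.mem_Ico]

lemma cube_measurable (d N : ℕ) (y : Zd d) : MeasurableSet (cube d N y) := by
  rw [cube_eq_preimage]
  exact (MeasurableEquiv.toLp 2 (Fin d → ℝ)).symm.measurable
    (MeasurableSet.univ_pi fun i => measurableSet_Ico)

lemma cube_volume (d N : ℕ) (hN : 1 ≤ N) (y : Zd d) :
    volume (cube d N y) = ENNReal.ofReal ((1/(N:ℝ))^d) := by
  rw [cube_eq_preimage,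
    (EuclideanSpace.volume_preserving_symm_measurableEquiv_toLp (Fin d)).measure_preimage
      (MeasurableSet.univ_pi fun i => measurableSet_Ico).nullMeasurableSet,
    volume_pi_pi]
  have hNpos : (0:ℝ) < N := by exact_mod_cast hN
  have : ∀ i : Fin d, volume (Set.Ico ((y i : ℝ)/N) (((y i : ℝ)+1)/N))
      = ENNReal.ofReal (1/(N:ℝ)) := by
    intro i
    rw [Real.volume_Ico]
    congr 1
    field_simp
    ring
  simp only [this, Finset.prod_const, Finset.card_univ, Fintype.card_fin]
  rw [← ENNReal.ofReal_pow (by positivity)]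

end Riemann

lemma cube_mem_iff (d N : ℕ) (hN : 1 ≤ N) (y : Zd d) (z : EuclideanSpace ℝ (Fin d)) :
    z ∈ cube d N y ↔ ∀ i, y i = ⌊(N:ℝ) * z i⌋ := by
  have hNpos : (0:ℝ) < N := by exact_mod_cast hN
  constructor
  · intro hz i
    obtain ⟨h1, h2⟩ := hz i
    have e1 : (y i : ℝ) ≤ N * z i := by
      rw [div_le_iff₀ hNpos] at h1; linarith [h1]
    have e2 : (N:ℝ) * z i < y i + 1 := by
      rw [lt_div_iff₀ hNpos] at h2; linarith [h2]
    symm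
    exact Int.floor_eq_iff.mpr ⟨by push_cast; linarith, by push_cast; linarith⟩
  · intro h i
    have h1 := Int.floor_le ((N:ℝ) * z i)
    have h2 := Int.lt_floor_add_one ((N:ℝ) * z i)
    rw [← h i] at h1 h2
    constructor
    · rw [div_le_iff₀ hNpos]; linarith
    · rw [lt_div_iff₀ hNpos]; push_cast; linarith

lemma cube_disjoint (d N : ℕ) (hN : 1 ≤ N) :
    Pairwise (Function.onFun Disjoint (cube d N)) := by
  intro y y' hne
  rw [Function.onFun, Set.disjoint_left]
  intro z hz hz'
  exact hne (funext fun i => ((cube_mem_iff d N hN y z).1 hz i).trans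
    (((cube_mem_iff d N hN y' z).1 hz' i).symm))

lemma cube_cover (d N : ℕ) (hN : 1 ≤ N) :
    (⋃ y : Zd d, cube d N y) = Set.univ := by
  ext z
  simp only [Set.mem_iUnion, Set.mem_univ, iff_true]
  exact ⟨fun i => ⌊(N:ℝ) * z i⌋, (cube_mem_iff d N hN _ z).2 fun i => rfl⟩

/-- The relevant finite window of lattice points around `x` at scale `N`. -/
def window (d N : ℕ) (x : EuclideanSpace ℝ (Fin d)) : Finset (Zd d) :=
  Fintype.piFinset fun i => Finset.Icc (⌈(N:ℝ) * x i⌉ - (N+2)) (⌊(N:ℝ) * x i⌋ + (N+2))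

lemma window_card (d N : ℕ) (hN : 1 ≤ N) (x : EuclideanSpace ℝ (Fin d)) :
    (window d N x).card ≤ (7*N)^d := by
  rw [window, Fintype.card_piFinset]
  calc ∏ i, (Finset.Icc (⌈(N:ℝ) * x i⌉ - (N+2)) (⌊(N:ℝ) * x i⌋ + (N+2))).card
      ≤ ∏ _i : Fin d, 7*N := by
        apply Finset.prod_le_prod'
        intro i _
        rw [Int.card_Icc]
        have hfc : ⌊(N:ℝ) * x i⌋ ≤ ⌈(N:ℝ) * x i⌉ := Int.floor_le_ceil _
        have : (⌊(N:ℝ) * x i⌋ + (N+2) + 1 - (⌈(N:ℝ) * x i⌉ - (N+2))) ≤ (2*N+5 : ℤ) := by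
          omega
        calc (⌊(N:ℝ) * x i⌋ + (N+2) + 1 - (⌈(N:ℝ) * x i⌉ - (N+2))).toNat ≤ (2*N+5 : ℤ).toNat :=
              Int.toNat_le_toNat this
          _ = 2*N+5 := by omega
          _ ≤ 7*N := by omega
    _ = (7*N)^d := by simp
  
lemma not_window_far (d N : ℕ) (hN : 1 ≤ N) (x : EuclideanSpace ℝ (Fin d)) (y : Zd d)
    (hy : y ∉ window d N x) : ∃ i, (N:ℝ) + 2 ≤ |(y i : ℝ) - N * x i| := by
  rw [window, Fintype.mem_piFinset] at hy
  push_neg at hy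
  obtain ⟨i, hi⟩ := hy
  rw [Finset.mem_Icc] at hi
  push_neg at hi
  refine ⟨i, ?_⟩
  by_cases hlo : y i < ⌈(N:ℝ) * x i⌉ - (N+2)
  · have h1 : (y i : ℝ) ≤ (⌈(N:ℝ) * x i⌉ : ℝ) - (N+3) := by
      have : y i ≤ ⌈(N:ℝ) * x i⌉ - (N+3) := by omega
      exact_mod_cast le_trans (by exact_mod_cast this) (by push_cast; linarith)
    have h2 : ((⌈(N:ℝ) * x i⌉ : ℝ)) ≤ N * x i + 1 := by
      have := Int.ceil_le_floor_add_one ((N:ℝ) * x i)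
      calc ((⌈(N:ℝ) * x i⌉ : ℝ)) ≤ (⌊(N:ℝ) * x i⌋ : ℝ) + 1 := by exact_mod_cast this
        _ ≤ N * x i + 1 := by linarith [Int.floor_le ((N:ℝ) * x i)]
    have : (y i : ℝ) - N * x i ≤ -(N+2) := by linarith
    rw [abs_sub_comm, le_abs]
    left; linarith
  · have hhi : ⌊(N:ℝ) * x i⌋ + (N+2) < y i := hi (by omega)
    have h1 : (⌊(N:ℝ) * x i⌋ : ℝ) + (N+3) ≤ (y i : ℝ) := by
      have : ⌊(N:ℝ) * x i⌋ + (N+3) ≤ y i := by omega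
      have : ((⌊(N:ℝ) * x i⌋ + (N+3) : ℤ) : ℝ) ≤ ((y i : ℤ) : ℝ) := by exact_mod_cast this
      push_cast at this
      linarith
    have h2 : (N:ℝ) * x i - 1 ≤ (⌊(N:ℝ) * x i⌋ : ℝ) := by
      linarith [Int.lt_floor_add_one ((N:ℝ) * x i)]
    rw [le_abs]
    left; linarith

lemma lattice_pt_coord (d N : ℕ) (y : Zd d) (i : Fin d) :
    ((N:ℝ)⁻¹ • embed d y) i = (y i : ℝ)/N := by
  simp [embed, div_eq_inv_mul]

lemma cube_far (d N : ℕ) (hN : 1 ≤ N) (x : EuclideanSpace ℝ (Fin d)) (y : Zd d)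
    (hy : y ∉ window d N x) :
    1 < ‖(N:ℝ)⁻¹ • embed d y - x‖ ∧ ∀ z ∈ cube d N y, 1 < ‖z - x‖ := by
  have hNpos : (0:ℝ) < N := by exact_mod_cast hN
  obtain ⟨i, hi⟩ := not_window_far d N hN x y hy
  have hcoord : 1 + 2/(N:ℝ) ≤ |((N:ℝ)⁻¹ • embed d y) i - x i| := by
    rw [lattice_pt_coord]
    have he : |(y i : ℝ)/N - x i| = |(y i : ℝ) - N * x i| / N := by
      have hm : (y i : ℝ) - N * x i = ((y i : ℝ)/N - x i) * N := by
        rw [sub_mul, div_mul_cancel₀ _ hNpos.ne']; ring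
      rw [hm, abs_mul, abs_of_pos hNpos, mul_div_assoc, div_self hNpos.ne', mul_one]
    rw [he, le_div_iff₀ hNpos]
    calc (1 + 2/(N:ℝ)) * N = N + 2 := by field_simp
      _ ≤ |(y i : ℝ) - N * x i| := hi
  have h2N : (0:ℝ) < 2/N := by positivity
  have h1N : (0:ℝ) < 1/N := by positivity
  constructor
  · have hn := abs_coord_le_norm ((N:ℝ)⁻¹ • embed d y - x) i
    have hsub : ((N:ℝ)⁻¹ • embed d y - x) i = ((N:ℝ)⁻¹ • embed d y) i - x i := rfl
    rw [hsub] at hn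
    linarith
  · intro z hz
    obtain ⟨h1, h2⟩ := hz i
    have hzi : |z i - ((N:ℝ)⁻¹ • embed d y) i| ≤ 1/N := by
      rw [lattice_pt_coord, abs_le]
      constructor
      · linarith
      · have : z i < (y i : ℝ)/N + 1/N := by
          calc z i < ((y i : ℝ)+1)/N := h2
            _ = (y i : ℝ)/N + 1/N := by ring
        linarith
    have htri : |((N:ℝ)⁻¹ • embed d y) i - x i| - |z i - ((N:ℝ)⁻¹ • embed d y) i|
        ≤ |z i - x i| := by
      have h := abs_sub (z i - x i) (z i - ((N:ℝ)⁻¹ • embed d y) i)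
      have he : z i - x i - (z i - ((N:ℝ)⁻¹ • embed d y) i)
          = ((N:ℝ)⁻¹ • embed d y) i - x i := by ring
      rw [he] at h
      linarith
    have hn := abs_coord_le_norm (z - x) i
    have hsub : (z - x) i = z i - x i := rfl
    rw [hsub] at hn
    have h21 : 2/(N:ℝ) = 1/N + 1/N := by ring
    linarith

lemma riemann_sum (d N : ℕ) (hd : 1 ≤ d) (hN : 1 ≤ N)
    (f : EuclideanSpace ℝ (Fin d) → ℝ) (L : ℝ) (hL : 0 ≤ L)
    (hf : ∀ a b, |f a - f b| ≤ L * ‖a - b‖)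
    (x : EuclideanSpace ℝ (Fin d)) (hsupp : ∀ z, 1 < ‖z - x‖ → f z = 0) :
    |(1 / (N:ℝ)^d) * (∑' y : Zd d, f ((N:ℝ)⁻¹ • embed d y)) - ∫ z, f z| ≤ L * ↑d * 7^d / N := by
  have hNpos : (0:ℝ) < N := by exact_mod_cast hN
  -- f is Lipschitz and compactly supported, hence integrable
  have hlip : LipschitzWith (Real.toNNReal L) f := by
    rw [lipschitzWith_iff_dist_le_mul]
    intro a b
    rw [Real.dist_eq, dist_eq_norm, Real.coe_toNNReal _ hL]
    exact hf a b
  have hcont : Continuous f := hlip.continuous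
  have hcs : HasCompactSupport f := by
    apply HasCompactSupport.intro (isCompact_closedBall x 1)
    intro z hz
    apply hsupp
    rw [Metric.mem_closedBall, dist_eq_norm, not_le] at hz
    exact hz
  have hint : Integrable f := hcont.integrable_of_hasCompactSupport hcs
  -- lattice sum over the window
  have hlatzero : ∀ y : Zd d, y ∉ window d N x → f ((N:ℝ)⁻¹ • embed d y) = 0 := fun y hy =>
    hsupp _ ((cube_far d N hN x y hy).1)
  have hsum1 : (∑' y : Zd d, f ((N:ℝ)⁻¹ • embed d y))
      = ∑ y ∈ window d N x, f ((N:ℝ)⁻¹ • embed d y) := tsum_eq_sum hlatzero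
  -- integral over the window
  have hcubezero : ∀ y : Zd d, y ∉ window d N x → ∫ z in cube d N y, f z = 0 := by
    intro y hy
    exact setIntegral_eq_zero_of_forall_eq_zero fun z hz =>
      hsupp z ((cube_far d N hN x y hy).2 z hz)
  have hintdecomp : (∫ z, f z) = ∑ y ∈ window d N x, ∫ z in cube d N y, f z := by
    have h1 : (∫ z, f z) = ∫ z in (⋃ y : Zd d, cube d N y), f z := by
      rw [cube_cover d N hN, Measure.restrict_univ]
    rw [h1, integral_iUnion (cube_measurable d N) (cube_disjoint d N hN) hint.integrableOn]
    exact tsum_eq_sum hcubezero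
  -- per-cube estimate
  have hvol : ∀ y : Zd d, (volume (cube d N y)).toReal = (1/(N:ℝ))^d := by
    intro y
    rw [cube_volume d N hN y, ENNReal.toReal_ofReal (by positivity)]
  have hvolfin : ∀ y : Zd d, volume (cube d N y) < ⊤ := by
    intro y
    rw [cube_volume d N hN y]
    exact ENNReal.ofReal_lt_top
  have hcube : ∀ y : Zd d,
      |(1/(N:ℝ))^d * f ((N:ℝ)⁻¹ • embed d y) - ∫ z in cube d N y, f z|
        ≤ L * (d/N) * (1/(N:ℝ))^d := by
    intro y
    have hconst : ∫ _z in cube d N y, f ((N:ℝ)⁻¹ • embed d y) ∂volume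
        = (1/(N:ℝ))^d * f ((N:ℝ)⁻¹ • embed d y) := by
      rw [setIntegral_const, measureReal_def, hvol y, smul_eq_mul]
    have hsub : (1/(N:ℝ))^d * f ((N:ℝ)⁻¹ • embed d y) - ∫ z in cube d N y, f z
        = -(∫ z in cube d N y, (f z - f ((N:ℝ)⁻¹ • embed d y))) := by
      rw [integral_sub hint.integrableOn (integrableOn_const (hvolfin y).ne), hconst]
      ring
    rw [hsub, abs_neg]
    have hbd : ∀ z ∈ cube d N y, ‖f z - f ((N:ℝ)⁻¹ • embed d y)‖ ≤ L * (d/N) := by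
      intro z hz
      rw [Real.norm_eq_abs]
      refine le_trans (hf z _) ?_
      have hnorm : ‖z - (N:ℝ)⁻¹ • embed d y‖ ≤ d * (1/N) := by
        apply norm_le_of_coords hd _ (by positivity)
        intro i
        have hsub2 : (z - (N:ℝ)⁻¹ • embed d y) i = z i - ((N:ℝ)⁻¹ • embed d y) i := rfl
        rw [hsub2, lattice_pt_coord]
        obtain ⟨h1, h2⟩ := hz i
        have h1N : (0:ℝ) < 1/N := by positivity
        rw [abs_le]
        constructor
        · linarith
        · have : z i < (y i : ℝ)/N + 1/N := by
            calc z i < ((y i : ℝ)+1)/N := h2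
              _ = (y i : ℝ)/N + 1/N := by ring
          linarith
      calc L * ‖z - (N:ℝ)⁻¹ • embed d y‖ ≤ L * (d * (1/N)) := by
            exact mul_le_mul_of_nonneg_left hnorm hL
        _ = L * (d/N) := by ring
    have hmeas : AEStronglyMeasurable (fun z => f z - f ((N:ℝ)⁻¹ • embed d y))
        (volume.restrict (cube d N y)) :=
      ((hcont.sub continuous_const).aestronglyMeasurable).restrict
    have hb := norm_setIntegral_le_of_norm_le_const (μ := volume) (hvolfin y) hbd
    rw [Real.norm_eq_abs, measureReal_def, hvol y] at hb
    exact hb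
  -- put together
  rw [hsum1, hintdecomp, Finset.mul_sum, ← Finset.sum_sub_distrib]
  have hpow : (1:ℝ) / (N:ℝ)^d = (1/(N:ℝ))^d := by rw [div_pow, one_pow]
  calc |∑ y ∈ window d N x, (1/(N:ℝ)^d * f ((N:ℝ)⁻¹ • embed d y) - ∫ z in cube d N y, f z)|
      ≤ ∑ y ∈ window d N x, |1/(N:ℝ)^d * f ((N:ℝ)⁻¹ • embed d y) - ∫ z in cube d N y, f z| :=
        Finset.abs_sum_le_sum_abs _ _
    _ ≤ ∑ _y ∈ window d N x, L * (d/N) * (1/(N:ℝ))^d := by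
        apply Finset.sum_le_sum
        intro y _
        rw [hpow]
        exact hcube y
    _ = (window d N x).card * (L * (d/N) * (1/(N:ℝ))^d) := by
        rw [Finset.sum_const, nsmul_eq_mul]
    _ ≤ ((7*N)^d : ℕ) * (L * (d/N) * (1/(N:ℝ))^d) := by
        apply mul_le_mul_of_nonneg_right _ (by positivity)
        exact_mod_cast window_card d N hN x
    _ = L * ↑d * 7^d / N := by
        push_cast
        rw [mul_pow, one_div, inv_pow]
        field_simp

lemma core_est (d : ℕ) (hd : 1 ≤ d) (R ε : ℝ) (hε0 : 0 < ε) (hε1 : ε < 1)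
    (χ : EuclideanSpace ℝ (Fin d) → ℝ) (K : NNReal) (hK : LipschitzWith K χ)
    (hχ01 : ∀ x, 0 ≤ χ x ∧ χ x ≤ 1) (hχsupp : ∀ x, 1 < ‖x‖ → χ x = 0)
    (hχint : ∫ x, χ x = 1)
    (N : ℕ) (hN : 1 ≤ N) (η : EuclideanSpace ℝ (Fin d) → ℝ)
    (x : EuclideanSpace ℝ (Fin d))
    (hηLip : LipschitzOnWith 1 η (boxR d R)) (hηbd : ∀ y, |η y| ≤ 1)
    (hx : x ∈ boxR d (R - ε)) :
    |(1 / (N : ℝ) ^ d) *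
        (∑' y : Zd d, (ε ^ d)⁻¹ * χ (ε⁻¹ • (x - (N : ℝ)⁻¹ • embed d y))
          * η ((N : ℝ)⁻¹ • embed d y)) - η x|
      ≤ ε * (∫ y, χ y * ‖y‖)
        + ((((ε^d)⁻¹*K*ε⁻¹) + ((ε^d)⁻¹ + ε*((ε^d)⁻¹*K*ε⁻¹))) * d * 7^d) / N := by
  have hNpos : (0:ℝ) < N := by exact_mod_cast hN
  have hεd : (0:ℝ) < ε^d := by positivity
  set L1 : ℝ := (ε^d)⁻¹*K*ε⁻¹ with hL1def
  set L2 : ℝ := (ε^d)⁻¹ + ε*L1 with hL2def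
  have hL1 : 0 ≤ L1 := by positivity
  have hL2 : 0 ≤ L2 := by positivity
  set f1 : EuclideanSpace ℝ (Fin d) → ℝ := fun z => (ε^d)⁻¹ * χ (ε⁻¹ • (x - z)) with hf1def
  set f2 : EuclideanSpace ℝ (Fin d) → ℝ := fun z => f1 z * ‖x - z‖ with hf2def
  have hf1nonneg : ∀ z, 0 ≤ f1 z := fun z => by
    exact mul_nonneg (by positivity) (hχ01 _).1
  have hf1le : ∀ z, f1 z ≤ (ε^d)⁻¹ := fun z => by
    calc f1 z ≤ (ε^d)⁻¹ * 1 := mul_le_mul_of_nonneg_left (hχ01 _).2 (by positivity)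
      _ = (ε^d)⁻¹ := mul_one _
  have hf1zero : ∀ z, ε < ‖x - z‖ → f1 z = 0 := by
    intro z hz
    have : 1 < ‖ε⁻¹ • (x - z)‖ := by
      rw [norm_smul, Real.norm_eq_abs, abs_of_pos (inv_pos.mpr hε0)]
      rw [lt_inv_mul_iff₀ hε0]
      linarith
    simp [hf1def, hχsupp _ this]
  -- Lipschitz estimate for f1
  have hf1Lip : ∀ a b, |f1 a - f1 b| ≤ L1 * ‖a - b‖ := by
    intro a b
    have hdist := hK.dist_le_mul (ε⁻¹ • (x - a)) (ε⁻¹ • (x - b))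
    rw [Real.dist_eq, dist_eq_norm] at hdist
    have he : ε⁻¹ • (x - a) - ε⁻¹ • (x - b) = ε⁻¹ • (b - a) := by
      rw [← smul_sub]; congr 1; abel
    rw [he, norm_smul, Real.norm_eq_abs, abs_of_pos (inv_pos.mpr hε0)] at hdist
    have : |f1 a - f1 b| = (ε^d)⁻¹ * |χ (ε⁻¹ • (x - a)) - χ (ε⁻¹ • (x - b))| := by
      rw [hf1def, ← mul_sub, abs_mul, abs_of_pos (by positivity)]
    rw [this]
    calc (ε^d)⁻¹ * |χ (ε⁻¹ • (x - a)) - χ (ε⁻¹ • (x - b))|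
        ≤ (ε^d)⁻¹ * ((K:ℝ) * (ε⁻¹ * ‖b - a‖)) := by
          apply mul_le_mul_of_nonneg_left _ (by positivity)
          exact hdist
      _ = L1 * ‖a - b‖ := by rw [norm_sub_rev b a, hL1def]; ring
  -- Lipschitz estimate for f2
  have hf2Lip : ∀ a b, |f2 a - f2 b| ≤ L2 * ‖a - b‖ := by
    intro a b
    by_cases hb : ‖x - b‖ ≤ ε
    · have he : f2 a - f2 b = f1 a * (‖x-a‖ - ‖x-b‖) + (f1 a - f1 b) * ‖x-b‖ := by
        rw [hf2def]; ring
      rw [he]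
      have hnn : |‖x-a‖ - ‖x-b‖| ≤ ‖a - b‖ := by
        have := abs_norm_sub_norm_le (x - a) (x - b)
        have he2 : x - a - (x - b) = b - a := by abel
        rw [he2, norm_sub_rev b a] at this
        exact this
      calc |f1 a * (‖x-a‖ - ‖x-b‖) + (f1 a - f1 b) * ‖x-b‖|
          ≤ |f1 a * (‖x-a‖ - ‖x-b‖)| + |(f1 a - f1 b) * ‖x-b‖| := abs_add_le _ _
        _ = f1 a * |‖x-a‖ - ‖x-b‖| + |f1 a - f1 b| * ‖x-b‖ := by
            rw [abs_mul (f1 a) (‖x-a‖ - ‖x-b‖), abs_mul (f1 a - f1 b) (‖x-b‖),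
              abs_of_nonneg (hf1nonneg a), abs_of_nonneg (norm_nonneg (x-b))]
        _ ≤ (ε^d)⁻¹ * ‖a-b‖ + (L1 * ‖a-b‖) * ε := by
            apply add_le_add
            · exact mul_le_mul (hf1le a) hnn (abs_nonneg _) (by positivity)
            · exact mul_le_mul (hf1Lip a b) hb (norm_nonneg _)
                (mul_nonneg hL1 (norm_nonneg _))
        _ = L2 * ‖a-b‖ := by rw [hL2def]; ring
    · have hfb : f1 b = 0 := hf1zero b (not_le.mp hb)
      have hfb2 : f2 b = 0 := by rw [hf2def]; simp [hfb]
      by_cases ha : ‖x - a‖ ≤ ε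
      · have h1 : f1 a ≤ L1 * ‖a - b‖ := by
          have := hf1Lip a b
          rw [hfb, sub_zero, abs_of_nonneg (hf1nonneg a)] at this
          exact this
        rw [hfb2, sub_zero, hf2def, abs_of_nonneg (mul_nonneg (hf1nonneg a) (norm_nonneg _))]
        calc f1 a * ‖x - a‖ ≤ (L1 * ‖a - b‖) * ε :=
              mul_le_mul h1 ha (norm_nonneg _) (mul_nonneg hL1 (norm_nonneg _))
          _ ≤ L2 * ‖a - b‖ := by
              rw [hL2def]
              have : (0:ℝ) ≤ (ε^d)⁻¹ * ‖a - b‖ := by positivity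
              nlinarith [norm_nonneg (a - b)]
      · have hfa : f1 a = 0 := hf1zero a (not_le.mp ha)
        have hfa2 : f2 a = 0 := by rw [hf2def]; simp [hfa]
        rw [hfa2, hfb2, sub_zero, abs_zero]
        positivity
  -- supports
  have hsupp1 : ∀ z, 1 < ‖z - x‖ → f1 z = 0 := by
    intro z hz
    apply hf1zero
    rw [norm_sub_rev]
    linarith
  have hsupp2 : ∀ z, 1 < ‖z - x‖ → f2 z = 0 := by
    intro z hz
    rw [hf2def]
    simp [hsupp1 z hz]
  -- integral of f1 is 1
  have hι0 : ∫ z, χ (ε⁻¹ • (x - z)) = ε^d := by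
    have h1 : ∫ z, χ (ε⁻¹ • (x - z)) = ∫ z, χ (ε⁻¹ • z) :=
      integral_sub_left_eq_self (fun z => χ (ε⁻¹ • z)) volume x
    rw [h1, Measure.integral_comp_inv_smul_of_nonneg volume χ hε0.le, hχint,
      finrank_euclideanSpace_fin, smul_eq_mul, mul_one]
  have hint1 : ∫ z, f1 z = 1 := by
    rw [hf1def]
    rw [integral_const_mul, hι0]
    field_simp
  -- integral of f2
  have hint2 : ∫ z, f2 z = ε * ∫ y, χ y * ‖y‖ := by
    have h1 : ∫ z, f2 z = (ε^d)⁻¹ * ∫ z, χ (ε⁻¹ • (x - z)) * ‖x - z‖ := by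
      rw [hf2def, hf1def]
      simp only [mul_assoc]
      rw [integral_const_mul]
    have h2 : (∫ z, χ (ε⁻¹ • (x - z)) * ‖x - z‖) = ∫ z, χ (ε⁻¹ • z) * ‖z‖ :=
      integral_sub_left_eq_self (fun z => χ (ε⁻¹ • z) * ‖z‖) volume x
    have h3 : (∫ z, χ (ε⁻¹ • z) * ‖z‖) = ε^d * (ε * ∫ y, χ y * ‖y‖) := by
      have h5 := Measure.integral_comp_inv_smul_of_nonneg volume
        (fun w : EuclideanSpace ℝ (Fin d) => χ w * ‖ε • w‖) hε0.le
      rw [finrank_euclideanSpace_fin] at h5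
      simp only [smul_smul, mul_inv_cancel₀ hε0.ne', one_smul] at h5
      have h4 : (∫ w, χ w * ‖ε • w‖) = ε * ∫ y, χ y * ‖y‖ := by
        rw [← integral_const_mul]
        congr 1
        funext w
        rw [norm_smul, Real.norm_eq_abs, abs_of_pos hε0]
        ring
      rw [h4, smul_eq_mul] at h5
      exact h5
    rw [h1, h2, h3]
    field_simp
  -- Riemann sum estimates
  have r1 := riemann_sum d N hd hN f1 L1 hL1 hf1Lip x hsupp1
  have r2 := riemann_sum d N hd hN f2 L2 hL2 hf2Lip x hsupp2
  rw [hint1] at r1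
  rw [hint2] at r2
  -- reduce all tsums to sums over the window
  have hwin : ∀ y : Zd d, y ∉ window d N x → f1 ((N:ℝ)⁻¹ • embed d y) = 0 := by
    intro y hy
    apply hsupp1
    exact (cube_far d N hN x y hy).1
  have hs1 : (∑' y : Zd d, f1 ((N:ℝ)⁻¹ • embed d y))
      = ∑ y ∈ window d N x, f1 ((N:ℝ)⁻¹ • embed d y) := tsum_eq_sum hwin
  have hs2 : (∑' y : Zd d, f2 ((N:ℝ)⁻¹ • embed d y))
      = ∑ y ∈ window d N x, f2 ((N:ℝ)⁻¹ • embed d y) := by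
    apply tsum_eq_sum
    intro y hy
    rw [hf2def]
    simp [hwin y hy]
  have hs3 : (∑' y : Zd d, (ε ^ d)⁻¹ * χ (ε⁻¹ • (x - (N : ℝ)⁻¹ • embed d y))
        * η ((N : ℝ)⁻¹ • embed d y))
      = ∑ y ∈ window d N x, f1 ((N:ℝ)⁻¹ • embed d y) * η ((N:ℝ)⁻¹ • embed d y) := by
    apply tsum_eq_sum
    intro y hy
    rw [show (ε ^ d)⁻¹ * χ (ε⁻¹ • (x - (N : ℝ)⁻¹ • embed d y)) * η ((N : ℝ)⁻¹ • embed d y)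
        = f1 ((N:ℝ)⁻¹ • embed d y) * η ((N:ℝ)⁻¹ • embed d y) from rfl]
    simp [hwin y hy]
  -- termwise comparison with f2
  have hterm : ∀ y : Zd d,
      f1 ((N:ℝ)⁻¹ • embed d y) * |η ((N:ℝ)⁻¹ • embed d y) - η x|
        ≤ f2 ((N:ℝ)⁻¹ • embed d y) := by
    intro y
    set q := (N:ℝ)⁻¹ • embed d y with hq
    by_cases hle : ‖x - q‖ ≤ ε
    · have hqbox : q ∈ boxR d R := by
        intro i
        have h1 : |x i| ≤ R - ε := hx i
        have h2 : |x i - q i| ≤ ε := by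
          have := abs_coord_le_norm (x - q) i
          have hsub : (x - q) i = x i - q i := rfl
          rw [hsub] at this
          linarith
        calc |q i| = |x i - (x i - q i)| := by congr 1; ring
          _ ≤ |x i| + |x i - q i| := abs_sub _ _
          _ ≤ R := by linarith
      have hxbox : x ∈ boxR d R := by
        intro i
        have := hx i
        linarith [abs_nonneg (x i)]
      have hdist := hηLip.dist_le_mul q hqbox x hxbox
      rw [Real.dist_eq, dist_eq_norm] at hdist
      simp only [NNReal.coe_one, one_mul] at hdist
      rw [norm_sub_rev] at hdist
      calc f1 q * |η q - η x| ≤ f1 q * ‖x - q‖ :=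
            mul_le_mul_of_nonneg_left hdist (hf1nonneg q)
        _ = f2 q := rfl
    · rw [hf1zero q (not_le.mp hle)]
      rw [show f2 q = f1 q * ‖x - q‖ from rfl, hf1zero q (not_le.mp hle)]
      simp
  -- decomposition
  set S1 : ℝ := ∑ y ∈ window d N x, f1 ((N:ℝ)⁻¹ • embed d y) with hS1
  set S2 : ℝ := ∑ y ∈ window d N x, f2 ((N:ℝ)⁻¹ • embed d y) with hS2
  set S3 : ℝ := ∑ y ∈ window d N x, f1 ((N:ℝ)⁻¹ • embed d y) * η ((N:ℝ)⁻¹ • embed d y) with hS3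
  have hdec : (1 / (N:ℝ)^d) * S3 - η x
      = (1 / (N:ℝ)^d) * (∑ y ∈ window d N x,
          f1 ((N:ℝ)⁻¹ • embed d y) * (η ((N:ℝ)⁻¹ • embed d y) - η x))
        + ((1 / (N:ℝ)^d) * S1 - 1) * η x := by
    have e1 : ∑ y ∈ window d N x, f1 ((N:ℝ)⁻¹ • embed d y) * (η ((N:ℝ)⁻¹ • embed d y) - η x)
        = S3 - S1 * η x := by
      rw [hS3, hS1, Finset.sum_mul, ← Finset.sum_sub_distrib]
      congr 1
      funext y
      ring
    rw [e1]
    ring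
  -- bound the middle sum
  have hmid : |(1 / (N:ℝ)^d) * (∑ y ∈ window d N x,
      f1 ((N:ℝ)⁻¹ • embed d y) * (η ((N:ℝ)⁻¹ • embed d y) - η x))| ≤ (1 / (N:ℝ)^d) * S2 := by
    rw [abs_mul, abs_of_pos (show (0:ℝ) < 1/(N:ℝ)^d by positivity)]
    apply mul_le_mul_of_nonneg_left _ (by positivity)
    calc |∑ y ∈ window d N x, f1 ((N:ℝ)⁻¹ • embed d y) * (η ((N:ℝ)⁻¹ • embed d y) - η x)|
        ≤ ∑ y ∈ window d N x, |f1 ((N:ℝ)⁻¹ • embed d y) * (η ((N:ℝ)⁻¹ • embed d y) - η x)| :=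
          Finset.abs_sum_le_sum_abs _ _
      _ ≤ S2 := by
          rw [hS2]
          apply Finset.sum_le_sum
          intro y _
          rw [abs_mul, abs_of_nonneg (hf1nonneg _)]
          exact hterm y
  -- final combination
  rw [hs3]
  rw [hs1] at r1
  rw [hs2] at r2
  have hS2nn : 0 ≤ (1 / (N:ℝ)^d) * S2 := by
    apply mul_nonneg (by positivity)
    apply Finset.sum_nonneg
    intro y _
    exact mul_nonneg (hf1nonneg _) (norm_nonneg _)
  have hb2 : (1 / (N:ℝ)^d) * S2 ≤ ε * (∫ y, χ y * ‖y‖) + L2 * ↑d * 7^d / N := by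
    have := abs_le.mp r2
    linarith [this.2]
  have hb1 : |(1 / (N:ℝ)^d) * S1 - 1| ≤ L1 * ↑d * 7^d / N := r1
  calc |(1 / (N:ℝ)^d) * S3 - η x|
      ≤ (1 / (N:ℝ)^d) * S2 + |(1 / (N:ℝ)^d) * S1 - 1| * |η x| := by
        rw [hdec]
        calc |(1 / (N:ℝ)^d) * (∑ y ∈ window d N x,
              f1 ((N:ℝ)⁻¹ • embed d y) * (η ((N:ℝ)⁻¹ • embed d y) - η x))
            + ((1 / (N:ℝ)^d) * S1 - 1) * η x|
            ≤ |(1 / (N:ℝ)^d) * (∑ y ∈ window d N x,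
                f1 ((N:ℝ)⁻¹ • embed d y) * (η ((N:ℝ)⁻¹ • embed d y) - η x))|
              + |((1 / (N:ℝ)^d) * S1 - 1) * η x| := abs_add_le _ _
          _ ≤ (1 / (N:ℝ)^d) * S2 + |(1 / (N:ℝ)^d) * S1 - 1| * |η x| := by
              rw [abs_mul ((1 / (N:ℝ)^d) * S1 - 1) (η x)]
              exact add_le_add hmid le_rfl
    _ ≤ (ε * (∫ y, χ y * ‖y‖) + L2 * ↑d * 7^d / N) + (L1 * ↑d * 7^d / N) * 1 := by
        apply add_le_add hb2
        apply mul_le_mul hb1 (hηbd x) (abs_nonneg _) (by positivity)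
    _ = ε * (∫ y, χ y * ‖y‖) + ((L1 + (ε^d)⁻¹ + ε*L1) * ↑d * 7^d) / N := by
        rw [hL2def]
        ring
    _ = ε * (∫ y, χ y * ‖y‖) + ((L1 + ((ε^d)⁻¹ + ε*L1)) * ↑d * 7^d) / N := by ring

/-- Uniform approximation of Lipschitz functions by discrete convolution with a mollifier:
for `χ` a Lipschitz `[0,1]`-valued probability density supported in the Euclidean unit ball,
`ε ∈ (0,1)`, `χ_ε(x) = ε^{−d}χ(x/ε)`, and
`η^ε_N(x) = N^{−d} ∑_{y∈ℤ^d} χ_ε(x − y/N) η(y/N)`, one has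
`limsup_N sup_η sup_{x ∈ B_{R−ε}} |η^ε_N(x) − η(x)| ≤ ε ∫ χ(y)|y| dy`, where `η` runs over
the `1`-Lipschitz functions on `B_R` bounded by `1` and extended by zero outside `B_R`. -/
theorem discrete_convolution_approx (d : ℕ) (hd : 1 ≤ d) (R ε : ℝ)
    (hR : 0 < R) (hε0 : 0 < ε) (hε1 : ε < 1)
    (χ : EuclideanSpace ℝ (Fin d) → ℝ)
    (hχLip : ∃ K : NNReal, LipschitzWith K χ)
    (hχ01 : ∀ x, 0 ≤ χ x ∧ χ x ≤ 1)
    (hχsupp : ∀ x, 1 < ‖x‖ → χ x = 0)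
    (hχint : ∫ x, χ x = 1) :
    limsup (fun N : ℕ =>
      sSup {v : ℝ | ∃ (η : EuclideanSpace ℝ (Fin d) → ℝ) (x : EuclideanSpace ℝ (Fin d)),
        LipschitzOnWith 1 η (boxR d R) ∧ (∀ y, |η y| ≤ 1) ∧
        (∀ y, y ∉ boxR d R → η y = 0) ∧ x ∈ boxR d (R - ε) ∧
        v = |(1 / (N : ℝ) ^ d) *
              (∑' y : Zd d, (ε ^ d)⁻¹ * χ (ε⁻¹ • (x - (N : ℝ)⁻¹ • embed d y))
                * η ((N : ℝ)⁻¹ • embed d y))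
            - η x|}) atTop
      ≤ ε * ∫ y, χ y * ‖y‖ := by
  obtain ⟨K, hK⟩ := hχLip
  set I : ℝ := ∫ y, χ y * ‖y‖ with hI
  have hI0 : 0 ≤ I := integral_nonneg fun y => mul_nonneg (hχ01 y).1 (norm_nonneg y)
  set A : ℝ := (((ε^d)⁻¹*K*ε⁻¹) + ((ε^d)⁻¹ + ε*((ε^d)⁻¹*K*ε⁻¹))) * d * 7^d with hA
  have hA0 : 0 ≤ A := by positivity
  set S : ℕ → ℝ := fun N =>
    sSup {v : ℝ | ∃ (η : EuclideanSpace ℝ (Fin d) → ℝ) (x : EuclideanSpace ℝ (Fin d)),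
        LipschitzOnWith 1 η (boxR d R) ∧ (∀ y, |η y| ≤ 1) ∧
        (∀ y, y ∉ boxR d R → η y = 0) ∧ x ∈ boxR d (R - ε) ∧
        v = |(1 / (N : ℝ) ^ d) *
              (∑' y : Zd d, (ε ^ d)⁻¹ * χ (ε⁻¹ • (x - (N : ℝ)⁻¹ • embed d y))
                * η ((N : ℝ)⁻¹ • embed d y))
            - η x|} with hS
  have hSle : ∀ N : ℕ, 1 ≤ N → S N ≤ ε*I + A/N := by
    intro N hN
    have hNpos : (0:ℝ) < N := by exact_mod_cast hN
    apply Real.sSup_le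
    · rintro v ⟨η, x, hηLip, hηbd, _hηzero, hx, rfl⟩
      exact core_est d hd R ε hε0 hε1 χ K hK hχ01 hχsupp hχint N hN η x hηLip hηbd hx
    · positivity
  have hScobdd : IsCoboundedUnder (· ≤ ·) atTop S := by
    apply Filter.isCoboundedUnder_le_of_eventually_le atTop (x := 0)
    filter_upwards with N
    apply Real.sSup_nonneg
    rintro v ⟨η, x, _, _, _, _, rfl⟩
    exact abs_nonneg _
  refine le_of_forall_pos_le_add fun δ hδ => ?_
  apply Filter.limsup_le_of_le hScobdd
  filter_upwards [Filter.eventually_ge_atTop (⌈A/δ⌉₊ + 1)] with N hN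
  have hN1 : 1 ≤ N := le_trans (Nat.le_add_left 1 _) hN
  have hNpos : (0:ℝ) < N := by exact_mod_cast hN1
  have hdiv : A/N ≤ δ := by
    have h1 : (A/δ : ℝ) ≤ N := by
      calc (A/δ : ℝ) ≤ ⌈A/δ⌉₊ := Nat.le_ceil _
        _ ≤ N := by exact_mod_cast le_trans (Nat.le_succ _) hN
    rw [div_le_iff₀ hNpos]
    calc A = (A/δ) * δ := by field_simp
      _ ≤ N * δ := mul_le_mul_of_nonneg_right h1 hδ.le
      _ = δ * N := mul_comm _ _
  calc S N ≤ ε*I + A/N := hSle N hN1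
    _ ≤ ε*I + δ := by linarith
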